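/- In the change-point factor model with white-noise orthogonality, let B_i ∈ ℝ^{p×(p−k_i)} have orthonormal columns with B_iᵀ A_i = 0, and define G(γ) = ‖B1ᵀ M_1(γ) B1‖₂ + ‖B2ᵀ M_2(γ) B2‖₂ with M_i(γ) = Σ_{h=1}^{h0} Σ_{y,i}(h,γ) Σ_{y,i}(h,γ)ᵀ. Let ε satisfy (h0+1)/n < ε < 1−γ0 ≤ 1 with εn an integer, and assume: (i) ‖A2 v‖₂ ≥ a2 p^{(1−δ2)/2} ‖v‖₂ for all v ∈ ℝ^{k2}, with a2 > 0 and δ2 ∈ [0,1]; (ii) ‖B1ᵀ A2‖₂² ≥ a2² d² τ p^{1−δ2} for some d > 0 and τ > 0; (iii) there exists h2* ∈ {1,…,h0} such that the matrix Γ = (1/(εn−h2*)) · Σ_{t=r0+1}^{r0+εn−h2*} E[x_{t,2} x_{t+h2*,2}ᵀ] satisfies ‖Γ v‖₂ ≥ u0 ‖v‖₂ for all v ∈ ℝ^{k2}, with u0 > 0. Then G(γ0+ε) ≥ a2⁴ d² τ u0² ( ε² p^{2−2δ2} − 2 h2* p^{2−2δ2} / n ). -/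

import Mathlib

open Matrix MeasureTheory Finset

/-- Entrywise expectation of the outer product `E[u vᵀ]`. -/
noncomputable def outerE {Ω : Type} [MeasurableSpace Ω] (μ : Measure Ω) {a b : ℕ}
    (u : Ω → Fin a → ℝ) (v : Ω → Fin b → ℝ) : Matrix (Fin a) (Fin b) ℝ :=
  Matrix.of fun i j => ∫ ω, u ω i * v ω j ∂μ

/-- `Σ_{y,1}(h,γ) = (1/n)·Σ_{t=1}^{r−h} E[y_t y_{t+h}ᵀ]` where `r = ⌊γn⌋`. -/
noncomputable def SigY1 {Ω : Type} [MeasurableSpace Ω] (μ : Measure Ω) {p : ℕ}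
    (y : ℕ → Ω → Fin p → ℝ) (n h r : ℕ) : Matrix (Fin p) (Fin p) ℝ :=
  (n : ℝ)⁻¹ • ∑ t ∈ Finset.Icc 1 (r - h), outerE μ (y t) (y (t + h))

/-- `Σ_{y,2}(h,γ) = (1/n)·Σ_{t=r+1}^{n−h} E[y_t y_{t+h}ᵀ]` where `r = ⌊γn⌋`. -/
noncomputable def SigY2 {Ω : Type} [MeasurableSpace Ω] (μ : Measure Ω) {p : ℕ}
    (y : ℕ → Ω → Fin p → ℝ) (n h r : ℕ) : Matrix (Fin p) (Fin p) ℝ :=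
  (n : ℝ)⁻¹ • ∑ t ∈ Finset.Icc (r + 1) (n - h), outerE μ (y t) (y (t + h))

/-- Spectral norm (largest singular value) of a real matrix. -/
noncomputable def spec {m n : ℕ} (A : Matrix (Fin m) (Fin n) ℝ) : ℝ :=
  ‖LinearMap.toContinuousLinearMap (Matrix.toEuclideanLin A)‖

/-- Euclidean norm of a vector. -/
noncomputable def vnorm {n : ℕ} (v : Fin n → ℝ) : ℝ :=
  Real.sqrt (∑ i, v i ^ 2)

namespace Stmt18Aux

/-! ### Euclidean norm / spectral norm basics -/

lemma vnorm_eq_norm {n : ℕ} (v : Fin n → ℝ) :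
    vnorm v = ‖(WithLp.equiv 2 (Fin n → ℝ)).symm v‖ := by
  rw [EuclideanSpace.norm_eq]
  simp [vnorm, Real.norm_eq_abs, sq_abs]

lemma vnorm_nonneg {n : ℕ} (v : Fin n → ℝ) : 0 ≤ vnorm v := Real.sqrt_nonneg _

lemma vnorm_eq_zero {n : ℕ} {v : Fin n → ℝ} (h : vnorm v = 0) : v = 0 := by
  rw [vnorm_eq_norm, norm_eq_zero] at h
  simpa using congrArg (WithLp.equiv 2 (Fin n → ℝ)) h

lemma spec_nonneg {m n : ℕ} (A : Matrix (Fin m) (Fin n) ℝ) : 0 ≤ spec A := norm_nonneg _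

lemma vnorm_mulVec_le {m n : ℕ} (A : Matrix (Fin m) (Fin n) ℝ) (v : Fin n → ℝ) :
    vnorm (A.mulVec v) ≤ spec A * vnorm v := by
  rw [vnorm_eq_norm, vnorm_eq_norm]
  have h := (LinearMap.toContinuousLinearMap (Matrix.toEuclideanLin A)).le_opNorm
    ((WithLp.equiv 2 (Fin n → ℝ)).symm v)
  simpa [Matrix.toEuclideanLin_apply_piLp_toLp, spec] using h

lemma spec_le_bound {m n : ℕ} (A : Matrix (Fin m) (Fin n) ℝ) {c : ℝ} (hc : 0 ≤ c)
    (h : ∀ v, vnorm (A.mulVec v) ≤ c * vnorm v) : spec A ≤ c := by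
  apply ContinuousLinearMap.opNorm_le_bound _ hc
  intro x
  have := h ((WithLp.equiv 2 (Fin n → ℝ)) x)
  rw [vnorm_eq_norm, vnorm_eq_norm] at this
  simpa [Matrix.toEuclideanLin_apply] using this

lemma dot_eq_inner {n : ℕ} (u v : Fin n → ℝ) :
    u ⬝ᵥ v = inner ℝ ((WithLp.equiv 2 (Fin n → ℝ)).symm u) ((WithLp.equiv 2 (Fin n → ℝ)).symm v) := by
  rw [PiLp.inner_apply]
  simp [dotProduct, RCLike.inner_apply, mul_comm]

lemma dot_le_vnorm {n : ℕ} (u v : Fin n → ℝ) : u ⬝ᵥ v ≤ vnorm u * vnorm v := by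
  rw [dot_eq_inner, vnorm_eq_norm, vnorm_eq_norm]
  exact real_inner_le_norm _ _

lemma vnorm_sq {n : ℕ} (v : Fin n → ℝ) : vnorm v ^ 2 = v ⬝ᵥ v := by
  rw [vnorm, Real.sq_sqrt (by positivity)]
  simp [dotProduct, sq]

lemma dot_mulVec_swap {m n : ℕ} (A : Matrix (Fin m) (Fin n) ℝ) (u : Fin n → ℝ) (w : Fin m → ℝ) :
    u ⬝ᵥ (Aᵀ.mulVec w) = (A.mulVec u) ⬝ᵥ w := by
  rw [Matrix.mulVec_transpose, dotProduct_comm, ← dotProduct_mulVec,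
    dotProduct_comm]

lemma spec_transpose_le {m n : ℕ} (A : Matrix (Fin m) (Fin n) ℝ) : spec Aᵀ ≤ spec A := by
  apply spec_le_bound _ (spec_nonneg A)
  intro w
  set s := vnorm (Aᵀ.mulVec w) with hs
  have hsq : s ^ 2 = (A.mulVec (Aᵀ.mulVec w)) ⬝ᵥ w := by
    rw [hs, vnorm_sq, dot_mulVec_swap]
  have h1 : s ^ 2 ≤ spec A * s * vnorm w := by
    rw [hsq]
    calc (A.mulVec (Aᵀ.mulVec w)) ⬝ᵥ w ≤ vnorm (A.mulVec (Aᵀ.mulVec w)) * vnorm w :=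
          dot_le_vnorm _ _
      _ ≤ (spec A * s) * vnorm w := by
          have := vnorm_mulVec_le A (Aᵀ.mulVec w)
          nlinarith [vnorm_nonneg w]
  rcases eq_or_lt_of_le (show (0:ℝ) ≤ s from vnorm_nonneg _) with h | h
  · rw [← h]; exact mul_nonneg (spec_nonneg A) (vnorm_nonneg w)
  · nlinarith

lemma spec_transpose {m n : ℕ} (A : Matrix (Fin m) (Fin n) ℝ) : spec Aᵀ = spec A := by
  refine le_antisymm (spec_transpose_le A) ?_
  have := spec_transpose_le Aᵀ
  rwa [Matrix.transpose_transpose] at this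

lemma spec_mul_le {a b c : ℕ} (A : Matrix (Fin a) (Fin b) ℝ) (B : Matrix (Fin b) (Fin c) ℝ) :
    spec (A * B) ≤ spec A * spec B := by
  apply spec_le_bound _ (mul_nonneg (spec_nonneg A) (spec_nonneg B))
  intro v
  rw [← Matrix.mulVec_mulVec]
  calc vnorm (A.mulVec (B.mulVec v)) ≤ spec A * vnorm (B.mulVec v) := vnorm_mulVec_le _ _
    _ ≤ spec A * (spec B * vnorm v) := by
        have := vnorm_mulVec_le B v
        nlinarith [spec_nonneg A]
    _ = spec A * spec B * vnorm v := by ring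

lemma spec_smul {m n : ℕ} (c : ℝ) (A : Matrix (Fin m) (Fin n) ℝ) :
    spec (c • A) = |c| * spec A := by
  simp only [spec, _root_.map_smul]
  rw [show (c • LinearMap.toContinuousLinearMap (Matrix.toEuclideanLin A) : _ →L[ℝ] _)
    = c • LinearMap.toContinuousLinearMap (Matrix.toEuclideanLin A) from rfl]
  rw [norm_smul c (LinearMap.toContinuousLinearMap (Matrix.toEuclideanLin A))]
  simp [Real.norm_eq_abs]

lemma sum_mulVec {ι : Type*} (s : Finset ι) {a b : ℕ} (F : ι → Matrix (Fin a) (Fin b) ℝ)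
    (v : Fin b → ℝ) : (∑ h ∈ s, F h).mulVec v = ∑ h ∈ s, (F h).mulVec v := by
  ext i
  rw [Finset.sum_apply]
  simp only [Matrix.mulVec, dotProduct, Matrix.sum_apply, Finset.sum_mul]
  exact Finset.sum_comm

lemma sum_dot {ι : Type*} (s : Finset ι) {a : ℕ} (w : ι → Fin a → ℝ) (v : Fin a → ℝ) :
    (∑ h ∈ s, w h) ⬝ᵥ v = ∑ h ∈ s, (w h) ⬝ᵥ v := by
  simp only [dotProduct, Finset.sum_apply, Finset.sum_mul]
  exact Finset.sum_comm

/-- lower bound: if `A` expands norms by `cA`, then `cA * spec B ≤ spec (A*B)` -/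
lemma le_spec_mul_left {a b c : ℕ} (A : Matrix (Fin a) (Fin b) ℝ) (B : Matrix (Fin b) (Fin c) ℝ)
    {cA : ℝ} (hcA : 0 < cA) (h : ∀ v, cA * vnorm v ≤ vnorm (A.mulVec v)) :
    cA * spec B ≤ spec (A * B) := by
  have hB : spec B ≤ spec (A * B) / cA := by
    apply spec_le_bound _ (div_nonneg (spec_nonneg _) hcA.le)
    intro v
    have h1 : cA * vnorm (B.mulVec v) ≤ vnorm ((A * B).mulVec v) := by
      rw [← Matrix.mulVec_mulVec]; exact h _
    have h2 := vnorm_mulVec_le (A * B) v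
    rw [div_mul_eq_mul_div, le_div_iff₀ hcA]
    nlinarith
  rw [mul_comm]
  rwa [le_div_iff₀ hcA] at hB

/-- lower bound via an injective square factor on the right -/
lemma le_spec_mul_right {a b : ℕ} (N : Matrix (Fin a) (Fin b) ℝ) (G : Matrix (Fin b) (Fin b) ℝ)
    {u0 : ℝ} (hu0 : 0 < u0) (h : ∀ v, u0 * vnorm v ≤ vnorm (G.mulVec v)) :
    u0 * spec N ≤ spec (N * G) := by
  have hinj : Function.Injective (Matrix.toLin' G) := by
    intro v w hvw
    have h0 : G.mulVec (v - w) = 0 := by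
      simp only [Matrix.toLin'_apply] at hvw
      rw [Matrix.mulVec_sub, hvw, sub_self]
    have hz : vnorm (v - w) = 0 := by
      have := h (v - w)
      rw [h0] at this
      have h2 : vnorm (0 : Fin b → ℝ) = 0 := by simp [vnorm]
      rw [h2] at this
      nlinarith [vnorm_nonneg (v - w)]
    exact sub_eq_zero.mp (vnorm_eq_zero hz)
  have hbij : Function.Bijective (Matrix.toLin' G) :=
    ⟨hinj, (LinearMap.injective_iff_surjective).mp hinj⟩
  set f := LinearEquiv.ofBijective (Matrix.toLin' G) hbij with hf
  set D := LinearMap.toMatrix' (f.symm : (Fin b → ℝ) →ₗ[ℝ] (Fin b → ℝ)) with hD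
  have hGD : G * D = 1 := by
    have hcomp : Matrix.toLin' (G * D) = LinearMap.id := by
      rw [Matrix.toLin'_mul, hD, Matrix.toLin'_toMatrix']
      apply LinearMap.ext
      intro v
      show Matrix.toLin' G (f.symm v) = v
      exact f.apply_symm_apply v
    have h1 : Matrix.toLin' (G * D) = Matrix.toLin' (1 : Matrix (Fin b) (Fin b) ℝ) := by
      rw [hcomp, Matrix.toLin'_one]
    exact Matrix.toLin'.injective h1
  have hDbound : ∀ w, vnorm (D.mulVec w) ≤ u0⁻¹ * vnorm w := by
    intro w
    have h1 : G.mulVec (D.mulVec w) = w := by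
      rw [Matrix.mulVec_mulVec, hGD, Matrix.one_mulVec]
    have := h (D.mulVec w)
    rw [h1] at this
    rw [inv_mul_eq_div, le_div_iff₀ hu0, mul_comm]
    exact this
  have hspecD : spec D ≤ u0⁻¹ := spec_le_bound _ (by positivity) hDbound
  have hN : spec N ≤ spec (N * G) * u0⁻¹ := by
    have hNe : N = N * G * D := by rw [Matrix.mul_assoc, hGD, Matrix.mul_one]
    calc spec N = spec (N * G * D) := by rw [← hNe]
      _ ≤ spec (N * G) * spec D := spec_mul_le _ _
      _ ≤ spec (N * G) * u0⁻¹ := by nlinarith [spec_nonneg (N * G)]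
  calc u0 * spec N ≤ u0 * (spec (N * G) * u0⁻¹) := by nlinarith
    _ = spec (N * G) := by field_simp

lemma spec_sq_le_spec_sum {ι : Type*} (s : Finset ι) {a b : ℕ}
    (F : ι → Matrix (Fin a) (Fin b) ℝ) {j : ι} (hj : j ∈ s) :
    spec (F j) ^ 2 ≤ spec (∑ h ∈ s, F h * (F h)ᵀ) := by
  set S := ∑ h ∈ s, F h * (F h)ᵀ with hS
  have hSnn := spec_nonneg S
  have key : ∀ v : Fin a → ℝ, vnorm ((F j)ᵀ.mulVec v) ^ 2 ≤ spec S * vnorm v ^ 2 := by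
    intro v
    have hterm : ∀ h, ((F h * (F h)ᵀ).mulVec v) ⬝ᵥ v = vnorm ((F h)ᵀ.mulVec v) ^ 2 := by
      intro h
      rw [vnorm_sq, ← Matrix.mulVec_mulVec, ← dot_mulVec_swap, dotProduct_comm]
    have h3 : vnorm ((F j)ᵀ.mulVec v) ^ 2 ≤ (S.mulVec v) ⬝ᵥ v := by
      rw [hS, sum_mulVec]
      rw [sum_dot]
      rw [← hterm j]
      apply Finset.single_le_sum (fun h _ => ?_) hj
      rw [hterm h]; positivity
    have h4 : (S.mulVec v) ⬝ᵥ v ≤ spec S * vnorm v ^ 2 := by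
      calc (S.mulVec v) ⬝ᵥ v ≤ vnorm (S.mulVec v) * vnorm v := dot_le_vnorm _ _
        _ ≤ spec S * vnorm v * vnorm v := by
            nlinarith [vnorm_mulVec_le S v, vnorm_nonneg v]
        _ = spec S * vnorm v ^ 2 := by ring
    linarith
  have hb : spec ((F j)ᵀ) ≤ Real.sqrt (spec S) := by
    apply spec_le_bound _ (Real.sqrt_nonneg _)
    intro v
    have h5 : vnorm ((F j)ᵀ.mulVec v) ≤ Real.sqrt (spec S * vnorm v ^ 2) := by
      rw [← Real.sqrt_sq (vnorm_nonneg ((F j)ᵀ.mulVec v))]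
      exact Real.sqrt_le_sqrt (key v)
    rwa [Real.sqrt_mul hSnn, Real.sqrt_sq (vnorm_nonneg v)] at h5
  calc spec (F j) ^ 2 = spec ((F j)ᵀ) ^ 2 := by rw [spec_transpose]
    _ ≤ Real.sqrt (spec S) ^ 2 := by
        have := spec_nonneg ((F j)ᵀ); nlinarith
    _ = spec S := Real.sq_sqrt hSnn

/-! ### outerE algebra -/

variable {Ω : Type} [MeasurableSpace Ω] {μ : Measure Ω}

lemma integrable_mul_of_memℒp2 {f g : Ω → ℝ} (hf : MemLp f 2 μ) (hg : MemLp g 2 μ) :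
    Integrable (fun ω => f ω * g ω) μ := by
  have h1 := (hf.add hg).integrable_sq
  have h2 := hf.integrable_sq
  have h3 := hg.integrable_sq
  have heq : (fun ω => f ω * g ω) = fun ω => ((f ω + g ω) ^ 2 - f ω ^ 2 - g ω ^ 2) / 2 := by
    funext ω; ring
  rw [heq]
  exact (((h1.sub h2).sub h3).div_const 2)

lemma memℒp_mulVec {a c : ℕ} (A : Matrix (Fin c) (Fin a) ℝ) {u : Ω → Fin a → ℝ}
    (hu : ∀ i, MemLp (fun ω => u ω i) 2 μ) (i : Fin c) :
    MemLp (fun ω => A.mulVec (u ω) i) 2 μ := by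
  have heq : (fun ω => A.mulVec (u ω) i) = ∑ k : Fin a, fun ω => A i k * u ω k := by
    funext ω
    simp [Matrix.mulVec, dotProduct, Finset.sum_apply]
  rw [heq]
  exact memLp_finset_sum' _ (fun k _ => (hu k).const_mul (A i k))

lemma outerE_transpose {a b : ℕ} (u : Ω → Fin a → ℝ) (v : Ω → Fin b → ℝ) :
    (outerE μ u v)ᵀ = outerE μ v u := by
  ext i j
  simp [outerE, mul_comm]

lemma outerE_matmul_left {a b c : ℕ} (A : Matrix (Fin c) (Fin a) ℝ)
    (u : Ω → Fin a → ℝ) (v : Ω → Fin b → ℝ)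
    (hu : ∀ i, MemLp (fun ω => u ω i) 2 μ) (hv : ∀ j, MemLp (fun ω => v ω j) 2 μ) :
    outerE μ (fun ω => A.mulVec (u ω)) v = A * outerE μ u v := by
  ext i j
  simp only [outerE, Matrix.mul_apply, Matrix.of_apply]
  have heq : ∀ ω, A.mulVec (u ω) i * v ω j = ∑ k : Fin a, A i k * (u ω k * v ω j) := by
    intro ω
    simp [Matrix.mulVec, dotProduct, Finset.sum_mul, mul_assoc]
  rw [show (∫ ω, A.mulVec (u ω) i * v ω j ∂μ) = ∫ ω, ∑ k : Fin a, A i k * (u ω k * v ω j) ∂μ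
    from integral_congr_ae (Filter.Eventually.of_forall heq)]
  rw [integral_finset_sum _ (fun k _ =>
    ((integrable_mul_of_memℒp2 (hu k) (hv j)).const_mul (A i k)))]
  congr 1
  funext k
  rw [MeasureTheory.integral_const_mul]

lemma outerE_matmul_right {a b c : ℕ} (A : Matrix (Fin c) (Fin b) ℝ)
    (u : Ω → Fin a → ℝ) (v : Ω → Fin b → ℝ)
    (hu : ∀ i, MemLp (fun ω => u ω i) 2 μ) (hv : ∀ j, MemLp (fun ω => v ω j) 2 μ) :
    outerE μ u (fun ω => A.mulVec (v ω)) = outerE μ u v * Aᵀ := by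
  have h1 : (outerE μ u (fun ω => A.mulVec (v ω)))ᵀ = A * outerE μ v u := by
    rw [outerE_transpose]
    exact outerE_matmul_left A v u hv hu
  have h2 := congrArg Matrix.transpose h1
  rw [Matrix.transpose_transpose, Matrix.transpose_mul, outerE_transpose] at h2
  exact h2

lemma outerE_add_right {a b : ℕ} (u : Ω → Fin a → ℝ) (v w : Ω → Fin b → ℝ)
    (hu : ∀ i, MemLp (fun ω => u ω i) 2 μ) (hv : ∀ j, MemLp (fun ω => v ω j) 2 μ)
    (hw : ∀ j, MemLp (fun ω => w ω j) 2 μ) :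
    outerE μ u (fun ω => v ω + w ω) = outerE μ u v + outerE μ u w := by
  ext i j
  simp only [outerE, Matrix.of_apply, Matrix.add_apply, Pi.add_apply]
  rw [show (∫ ω, u ω i * (v ω j + w ω j) ∂μ) = ∫ ω, (u ω i * v ω j + u ω i * w ω j) ∂μ from
    integral_congr_ae (Filter.Eventually.of_forall fun ω => by ring)]
  exact integral_add (integrable_mul_of_memℒp2 (hu i) (hv j))
    (integrable_mul_of_memℒp2 (hu i) (hw j))

lemma outerE_add_left {a b : ℕ} (u v : Ω → Fin a → ℝ) (w : Ω → Fin b → ℝ)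
    (hu : ∀ i, MemLp (fun ω => u ω i) 2 μ) (hv : ∀ i, MemLp (fun ω => v ω i) 2 μ)
    (hw : ∀ j, MemLp (fun ω => w ω j) 2 μ) :
    outerE μ (fun ω => u ω + v ω) w = outerE μ u w + outerE μ v w := by
  ext i j
  simp only [outerE, Matrix.of_apply, Matrix.add_apply, Pi.add_apply]
  rw [show (∫ ω, (u ω i + v ω i) * w ω j ∂μ) = ∫ ω, (u ω i * w ω j + v ω i * w ω j) ∂μ from
    integral_congr_ae (Filter.Eventually.of_forall fun ω => by ring)]
  exact integral_add (integrable_mul_of_memℒp2 (hu i) (hw j))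
    (integrable_mul_of_memℒp2 (hv i) (hw j))

end Stmt18Aux

open Stmt18Aux

set_option maxHeartbeats 1000000 in
/-- In the change-point factor model with white-noise orthogonality,
with `B_i` orthonormal, `B_iᵀA_i = 0` and
`G(γ) = ‖B1ᵀ M_1(γ) B1‖₂ + ‖B2ᵀ M_2(γ) B2‖₂`, for `(h0+1)/n < ε < 1−γ0 ≤ 1` with
`εn ∈ ℕ`, under (i) a min-singular-value lower bound for `A2`, (ii)
`‖B1ᵀA2‖₂² ≥ a2²d²τp^{1−δ2}`, and (iii) a min-singular-value lower bound `u0` for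
`Γ` at some lag `h2* ∈ {1,…,h0}`, one has
`G(γ0+ε) ≥ a2⁴ d² τ u0² (ε² p^{2−2δ2} − 2 h2* p^{2−2δ2}/n)`. -/
theorem stmt18 {Ω : Type} [MeasurableSpace Ω] (μ : Measure Ω) [IsProbabilityMeasure μ]
    {p k1 k2 n r0 : ℕ} (hp : 0 < p) (hn : 0 < n) (hr0 : 1 ≤ r0) (hr0n : r0 ≤ n)
    (A1 : Matrix (Fin p) (Fin k1) ℝ) (A2 : Matrix (Fin p) (Fin k2) ℝ)
    (x1 : ℕ → Ω → Fin k1 → ℝ) (x2 : ℕ → Ω → Fin k2 → ℝ)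
    (e : ℕ → Ω → Fin p → ℝ) (y : ℕ → Ω → Fin p → ℝ)
    (hL2x1 : ∀ t j, MemLp (fun ω => x1 t ω j) 2 μ)
    (hL2x2 : ∀ t j, MemLp (fun ω => x2 t ω j) 2 μ)
    (hL2e : ∀ t i, MemLp (fun ω => e t ω i) 2 μ)
    (hmodel1 : ∀ t, 1 ≤ t → t ≤ r0 → ∀ ω, y t ω = A1.mulVec (x1 t ω) + e t ω)
    (hmodel2 : ∀ t, r0 < t → t ≤ n → ∀ ω, y t ω = A2.mulVec (x2 t ω) + e t ω)
    (hee : ∀ s t, s ≠ t → outerE μ (e s) (e t) = 0)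
    (hx1e : ∀ t s, outerE μ (x1 t) (e s) = 0)
    (hx2e : ∀ t s, outerE μ (x2 t) (e s) = 0)
    (B1 : Matrix (Fin p) (Fin (p - k1)) ℝ) (B2 : Matrix (Fin p) (Fin (p - k2)) ℝ)
    (hB1 : B1ᵀ * B1 = 1) (hB2 : B2ᵀ * B2 = 1)
    (hB1A1 : B1ᵀ * A1 = 0) (hB2A2 : B2ᵀ * A2 = 0)
    (h0 : ℕ) (hh0 : 1 ≤ h0)
    (ε : ℝ) (m : ℕ) (hm : ε * n = m)
    (hεlb : ((h0 : ℝ) + 1) / n < ε) (hεub : ε < 1 - (r0 : ℝ) / n)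
    (a2 δ2 : ℝ) (ha2 : 0 < a2) (hδ2 : δ2 ∈ Set.Icc (0:ℝ) 1)
    (hA2min : ∀ v : Fin k2 → ℝ,
      a2 * (p : ℝ) ^ ((1 - δ2) / 2) * vnorm v ≤ vnorm (A2.mulVec v))
    (d τ : ℝ) (hd : 0 < d) (hτ : 0 < τ)
    (hBA : a2 ^ 2 * d ^ 2 * τ * (p : ℝ) ^ (1 - δ2) ≤ spec (B1ᵀ * A2) ^ 2)
    (h2s : ℕ) (hh2s : h2s ∈ Finset.Icc 1 h0) (u0 : ℝ) (hu0 : 0 < u0)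
    (hΓmin : ∀ v : Fin k2 → ℝ,
      u0 * vnorm v ≤ vnorm
        ((((m : ℝ) - h2s)⁻¹ •
          ∑ t ∈ Finset.Icc (r0 + 1) (r0 + (m - h2s)),
            outerE μ (x2 t) (x2 (t + h2s))).mulVec v)) :
    a2 ^ 4 * d ^ 2 * τ * u0 ^ 2 *
        (ε ^ 2 * (p : ℝ) ^ (2 - 2 * δ2) - 2 * h2s * (p : ℝ) ^ (2 - 2 * δ2) / n) ≤
      spec (B1ᵀ * (∑ h ∈ Finset.Icc 1 h0,
          SigY1 μ y n h ⌊((r0 : ℝ) / n + ε) * n⌋₊ *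
            (SigY1 μ y n h ⌊((r0 : ℝ) / n + ε) * n⌋₊)ᵀ) * B1) +
      spec (B2ᵀ * (∑ h ∈ Finset.Icc 1 h0,
          SigY2 μ y n h ⌊((r0 : ℝ) / n + ε) * n⌋₊ *
            (SigY2 μ y n h ⌊((r0 : ℝ) / n + ε) * n⌋₊)ᵀ) * B2) := by
  have hn' : (0:ℝ) < n := by exact_mod_cast hn
  have hp' : (0:ℝ) < p := by exact_mod_cast hp
  -- basic index arithmetic
  have hh0m : h0 + 1 < m := by
    have h1 : (h0:ℝ) + 1 < ε * n := (div_lt_iff₀ hn').mp hεlb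
    rw [hm] at h1
    exact_mod_cast h1
  obtain ⟨hh2s1, hh2s2⟩ := Finset.mem_Icc.mp hh2s
  have hh2sm : h2s < m := lt_of_le_of_lt hh2s2 (lt_of_lt_of_le (Nat.lt_succ_self h0) hh0m.le)
  have hr0mn : r0 + m < n := by
    have h1 : ε * n < n - r0 := by
      have := hεub
      have h2 : (1 - (r0:ℝ)/n) * n = n - r0 := by field_simp
      nlinarith
    rw [hm] at h1
    have : (r0:ℝ) + m < n := by linarith
    exact_mod_cast this
  -- floor computation
  have hfloor : ⌊((r0 : ℝ) / n + ε) * n⌋₊ = r0 + m := by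
    have heq : ((r0 : ℝ) / n + ε) * n = ((r0 + m : ℕ) : ℝ) := by
      push_cast
      rw [← hm]
      field_simp
    rw [heq, Nat.floor_natCast]
  rw [hfloor]
  have hsecond : 0 ≤ spec (B2ᵀ * (∑ h ∈ Finset.Icc 1 h0,
      SigY2 μ y n h (r0 + m) * (SigY2 μ y n h (r0 + m))ᵀ) * B2) := spec_nonneg _
  -- reduce to the first term
  suffices hmain : a2 ^ 4 * d ^ 2 * τ * u0 ^ 2 *
      (ε ^ 2 * (p : ℝ) ^ (2 - 2 * δ2) - 2 * h2s * (p : ℝ) ^ (2 - 2 * δ2) / n) ≤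
      spec (B1ᵀ * (∑ h ∈ Finset.Icc 1 h0,
        SigY1 μ y n h (r0 + m) * (SigY1 μ y n h (r0 + m))ᵀ) * B1) by linarith
  -- L² of y
  have hL2y : ∀ t, 1 ≤ t → t ≤ n → ∀ i, MemLp (fun ω => y t ω i) 2 μ := by
    intro t h1 h2 i
    by_cases ht : t ≤ r0
    · have hyt : ∀ ω, y t ω = A1.mulVec (x1 t ω) + e t ω := hmodel1 t h1 ht
      have heq : (fun ω => y t ω i) = fun ω => A1.mulVec (x1 t ω) i + e t ω i := by
        funext ω; rw [hyt ω]; rfl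
      rw [heq]
      exact (memℒp_mulVec A1 (fun j => hL2x1 t j) i).add (hL2e t i)
    · have hyt : ∀ ω, y t ω = A2.mulVec (x2 t ω) + e t ω := hmodel2 t (Nat.lt_of_not_le ht) h2
      have heq : (fun ω => y t ω i) = fun ω => A2.mulVec (x2 t ω) i + e t ω i := by
        funext ω; rw [hyt ω]; rfl
      rw [heq]
      exact (memℒp_mulVec A2 (fun j => hL2x2 t j) i).add (hL2e t i)
  -- e ⊥ y
  have hey : ∀ t s, 1 ≤ s → s ≤ n → t ≠ s → outerE μ (e t) (y s) = 0 := by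
    intro t s h1 h2 hne
    have hxe1 : outerE μ (e t) (x1 s) = 0 := by
      rw [← outerE_transpose, hx1e s t, Matrix.transpose_zero]
    have hxe2 : outerE μ (e t) (x2 s) = 0 := by
      rw [← outerE_transpose, hx2e s t, Matrix.transpose_zero]
    by_cases hs : s ≤ r0
    · have hys : y s = fun ω => A1.mulVec (x1 s ω) + e s ω := funext (hmodel1 s h1 hs)
      rw [hys]
      rw [outerE_add_right (e t) (fun ω => A1.mulVec (x1 s ω)) (e s)
        (fun i => hL2e t i) (fun j => memℒp_mulVec A1 (fun j => hL2x1 s j) j)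
        (fun j => hL2e s j)]
      rw [outerE_matmul_right A1 (e t) (x1 s) (fun i => hL2e t i) (fun j => hL2x1 s j)]
      rw [hxe1, hee t s hne, Matrix.zero_mul, add_zero]
    · have hys : y s = fun ω => A2.mulVec (x2 s ω) + e s ω :=
        funext (hmodel2 s (Nat.lt_of_not_le hs) h2)
      rw [hys]
      rw [outerE_add_right (e t) (fun ω => A2.mulVec (x2 s ω)) (e s)
        (fun i => hL2e t i) (fun j => memℒp_mulVec A2 (fun j => hL2x2 s j) j)
        (fun j => hL2e s j)]
      rw [outerE_matmul_right A2 (e t) (x2 s) (fun i => hL2e t i) (fun j => hL2x2 s j)]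
      rw [hxe2, hee t s hne, Matrix.zero_mul, add_zero]
  -- pre-change rows are killed by B1ᵀ
  have hyB1 : ∀ t s, 1 ≤ t → t ≤ r0 → 1 ≤ s → s ≤ n → t ≠ s →
      B1ᵀ * outerE μ (y t) (y s) = 0 := by
    intro t s h1 h2 h3 h4 hne
    have hyt : y t = fun ω => A1.mulVec (x1 t ω) + e t ω := funext (hmodel1 t h1 h2)
    rw [hyt]
    rw [outerE_add_left (fun ω => A1.mulVec (x1 t ω)) (e t) (y s)
      (fun j => memℒp_mulVec A1 (fun j => hL2x1 t j) j) (fun i => hL2e t i)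
      (fun j => hL2y s h3 h4 j)]
    rw [outerE_matmul_left A1 (x1 t) (y s) (fun j => hL2x1 t j) (fun j => hL2y s h3 h4 j)]
    rw [hey t s h3 h4 hne, add_zero, ← Matrix.mul_assoc, hB1A1, Matrix.zero_mul]
  -- post-change rows
  have hyy2 : ∀ t, r0 < t → t + h2s ≤ n →
      outerE μ (y t) (y (t + h2s)) = A2 * outerE μ (x2 t) (x2 (t + h2s)) * A2ᵀ := by
    intro t ht htn
    have ht1 : 1 ≤ t := le_trans hr0 ht.le
    have htn' : t ≤ n := le_trans (Nat.le_add_right t h2s) htn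
    have hts : r0 < t + h2s := lt_of_lt_of_le ht (Nat.le_add_right t h2s)
    have hyt : y t = fun ω => A2.mulVec (x2 t ω) + e t ω := funext (hmodel2 t ht htn')
    have hyts : y (t + h2s) = fun ω => A2.mulVec (x2 (t + h2s) ω) + e (t + h2s) ω :=
      funext (hmodel2 (t + h2s) hts htn)
    have hne : t ≠ t + h2s := by omega
    rw [hyt]
    rw [outerE_add_left (fun ω => A2.mulVec (x2 t ω)) (e t) (y (t + h2s))
      (fun j => memℒp_mulVec A2 (fun j => hL2x2 t j) j) (fun i => hL2e t i)
      (fun j => hL2y (t + h2s) (by omega) htn j)]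
    rw [hey t (t + h2s) (by omega) htn hne, add_zero]
    rw [hyts]
    rw [outerE_add_right (fun ω => A2.mulVec (x2 t ω)) (fun ω => A2.mulVec (x2 (t + h2s) ω))
      (e (t + h2s)) (fun j => memℒp_mulVec A2 (fun j => hL2x2 t j) j)
      (fun j => memℒp_mulVec A2 (fun j => hL2x2 (t + h2s) j) j)
      (fun j => hL2e (t + h2s) j)]
    rw [outerE_matmul_left A2 (x2 t) (e (t + h2s)) (fun j => hL2x2 t j)
      (fun j => hL2e (t + h2s) j)]
    rw [hx2e t (t + h2s), Matrix.mul_zero, add_zero]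
    rw [outerE_matmul_right A2 (fun ω => A2.mulVec (x2 t ω)) (x2 (t + h2s))
      (fun j => memℒp_mulVec A2 (fun j => hL2x2 t j) j) (fun j => hL2x2 (t + h2s) j)]
    rw [outerE_matmul_left A2 (x2 t) (x2 (t + h2s)) (fun j => hL2x2 t j)
      (fun j => hL2x2 (t + h2s) j)]
  -- the key matrix identity
  set Gam := ((m : ℝ) - h2s)⁻¹ •
      ∑ t ∈ Finset.Icc (r0 + 1) (r0 + (m - h2s)), outerE μ (x2 t) (x2 (t + h2s)) with hGam
  set c : ℝ := (m : ℝ) - h2s with hc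
  have hcpos : 0 < c := by
    rw [hc]
    have : (h2s:ℝ) < m := by exact_mod_cast hh2sm
    linarith
  set K := B1ᵀ * A2 with hK
  set q : ℝ := (n:ℝ)⁻¹ * c with hq
  have hqpos : 0 < q := mul_pos (inv_pos.mpr hn') hcpos
  have hsub : r0 + m - h2s = r0 + (m - h2s) := by omega
  have hT : ∑ t ∈ Finset.Icc (r0 + 1) (r0 + (m - h2s)), outerE μ (x2 t) (x2 (t + h2s))
      = c • Gam := by
    rw [hGam, smul_smul, mul_inv_cancel₀ (ne_of_gt hcpos), one_smul]
  have hCval : B1ᵀ * SigY1 μ y n h2s (r0 + m) = q • (K * Gam * A2ᵀ) := by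
    simp only [SigY1]
    rw [Matrix.mul_smul, hsub]
    rw [Matrix.mul_sum]
    have e1 : Finset.Icc 1 (r0 + (m - h2s)) = Finset.Ioc 0 (r0 + (m - h2s)) :=
      Finset.Icc_add_one_left_eq_Ioc 0 _
    have e2 : Finset.Icc (r0 + 1) (r0 + (m - h2s)) = Finset.Ioc r0 (r0 + (m - h2s)) :=
      Finset.Icc_add_one_left_eq_Ioc r0 _
    rw [e1]
    rw [← Finset.sum_Ioc_consecutive (fun t => B1ᵀ * outerE μ (y t) (y (t + h2s)))
      (Nat.zero_le r0) (Nat.le_add_right r0 (m - h2s))]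
    have hz : ∑ t ∈ Finset.Ioc 0 r0, B1ᵀ * outerE μ (y t) (y (t + h2s)) = 0 := by
      apply Finset.sum_eq_zero
      intro t ht
      obtain ⟨ht1, ht2⟩ := Finset.mem_Ioc.mp ht
      exact hyB1 t (t + h2s) ht1 ht2 (by omega) (by omega) (by omega)
    rw [hz, zero_add]
    have hmain2 : ∑ t ∈ Finset.Ioc r0 (r0 + (m - h2s)), B1ᵀ * outerE μ (y t) (y (t + h2s))
        = K * (∑ t ∈ Finset.Ioc r0 (r0 + (m - h2s)),
            outerE μ (x2 t) (x2 (t + h2s))) * A2ᵀ := by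
      rw [show K * (∑ t ∈ Finset.Ioc r0 (r0 + (m - h2s)),
            outerE μ (x2 t) (x2 (t + h2s))) * A2ᵀ
          = ∑ t ∈ Finset.Ioc r0 (r0 + (m - h2s)),
            K * outerE μ (x2 t) (x2 (t + h2s)) * A2ᵀ by
        rw [Matrix.mul_sum, Matrix.sum_mul]]
      refine Finset.sum_congr rfl (fun t ht => ?_)
      obtain ⟨ht1, ht2⟩ := Finset.mem_Ioc.mp ht
      rw [hyy2 t ht1 (by omega), hK]
      simp [Matrix.mul_assoc]
    rw [hmain2, ← e2, hT]
    rw [Matrix.mul_smul, Matrix.smul_mul, smul_smul, ← hq]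
  -- spectral lower bounds
  set cA : ℝ := a2 * (p:ℝ) ^ ((1 - δ2)/2) with hcA
  have hcApos : 0 < cA := mul_pos ha2 (Real.rpow_pos_of_pos hp' _)
  set X := K * Gam with hX
  have hspecP : cA * (u0 * spec K) ≤ spec (K * Gam * A2ᵀ) := by
    have h1 : u0 * spec K ≤ spec X := le_spec_mul_right K Gam hu0 hΓmin
    have h2 : cA * spec Xᵀ ≤ spec (A2 * Xᵀ) := le_spec_mul_left A2 Xᵀ hcApos hA2min
    rw [spec_transpose] at h2
    have h3 : spec (A2 * Xᵀ) = spec (K * Gam * A2ᵀ) := by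
      rw [← spec_transpose (A2 * Xᵀ), Matrix.transpose_mul, Matrix.transpose_transpose, hX]
    rw [h3] at h2
    have h4 : cA * (u0 * spec K) ≤ cA * spec X :=
      mul_le_mul_of_nonneg_left h1 hcApos.le
    linarith
  have hspecC : q * (cA * (u0 * spec K)) ≤ spec (B1ᵀ * SigY1 μ y n h2s (r0 + m)) := by
    rw [hCval, spec_smul, abs_of_pos hqpos]
    exact mul_le_mul_of_nonneg_left hspecP hqpos.le
  -- spec of the PSD sum dominates
  have hFsum : B1ᵀ * (∑ h ∈ Finset.Icc 1 h0,
        SigY1 μ y n h (r0 + m) * (SigY1 μ y n h (r0 + m))ᵀ) * B1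
      = ∑ h ∈ Finset.Icc 1 h0,
        (B1ᵀ * SigY1 μ y n h (r0 + m)) * (B1ᵀ * SigY1 μ y n h (r0 + m))ᵀ := by
    rw [Matrix.mul_sum, Matrix.sum_mul]
    refine Finset.sum_congr rfl (fun h _ => ?_)
    rw [Matrix.transpose_mul, Matrix.transpose_transpose]
    simp [Matrix.mul_assoc]
  have hsum : spec (B1ᵀ * SigY1 μ y n h2s (r0 + m)) ^ 2 ≤
      spec (B1ᵀ * (∑ h ∈ Finset.Icc 1 h0,
        SigY1 μ y n h (r0 + m) * (SigY1 μ y n h (r0 + m))ᵀ) * B1) := by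
    rw [hFsum]
    exact spec_sq_le_spec_sum (Finset.Icc 1 h0)
      (fun h => B1ᵀ * SigY1 μ y n h (r0 + m)) hh2s
  -- numeric assembly
  have hspecK0 : 0 ≤ spec K := spec_nonneg _
  have hlhs0 : 0 ≤ q * (cA * (u0 * spec K)) := by
    have := hqpos.le; have := hcApos.le; have := hu0.le
    positivity
  have hsq2 : (q * (cA * (u0 * spec K))) ^ 2 ≤ spec (B1ᵀ * SigY1 μ y n h2s (r0 + m)) ^ 2 :=
    pow_le_pow_left₀ hlhs0 hspecC 2
  have hcA2 : cA ^ 2 = a2 ^ 2 * (p:ℝ) ^ (1 - δ2) := by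
    rw [hcA, mul_pow, ← Real.rpow_natCast ((p:ℝ) ^ ((1 - δ2)/2)) 2, ← Real.rpow_mul hp'.le]
    rw [show (1 - δ2)/2 * ((2:ℕ):ℝ) = 1 - δ2 by push_cast; ring]
  have hpp : (p:ℝ) ^ (1 - δ2) * (p:ℝ) ^ (1 - δ2) = (p:ℝ) ^ (2 - 2*δ2) := by
    rw [← Real.rpow_add hp']
    congr 1; ring
  have hqval : q = ε - (h2s:ℝ)/n := by
    rw [hq, hc, ← hm]
    field_simp
  have hε1 : ε ≤ 1 := by
    have h5 : (0:ℝ) ≤ (r0:ℝ)/n := by positivity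
    linarith
  have hkey : ∀ x : ℝ, 0 ≤ x → ε ^ 2 - 2*x ≤ (ε - x) ^ 2 := by
    intro x hx
    nlinarith [mul_nonneg (sub_nonneg.mpr hε1) hx, sq_nonneg x]
  have hq2lb : ε ^ 2 - 2*(h2s:ℝ)/n ≤ q ^ 2 := by
    rw [hqval]
    have h1 : (0:ℝ) ≤ (h2s:ℝ)/n := by positivity
    calc ε ^ 2 - 2*(h2s:ℝ)/n = ε ^ 2 - 2*((h2s:ℝ)/n) := by ring
      _ ≤ (ε - (h2s:ℝ)/n) ^ 2 := hkey _ h1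
  have hrp1 : (0:ℝ) < (p:ℝ) ^ (2 - 2*δ2) := Real.rpow_pos_of_pos hp' _
  have hrp2 : (0:ℝ) < (p:ℝ) ^ (1 - δ2) := Real.rpow_pos_of_pos hp' _
  calc a2 ^ 4 * d ^ 2 * τ * u0 ^ 2 *
        (ε ^ 2 * (p:ℝ) ^ (2 - 2*δ2) - 2 * h2s * (p:ℝ) ^ (2 - 2*δ2) / n)
      = (a2 ^ 4 * d ^ 2 * τ * u0 ^ 2 * (p:ℝ) ^ (2 - 2*δ2)) * (ε ^ 2 - 2*(h2s:ℝ)/n) := by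
        ring
    _ ≤ (a2 ^ 4 * d ^ 2 * τ * u0 ^ 2 * (p:ℝ) ^ (2 - 2*δ2)) * q ^ 2 := by
        apply mul_le_mul_of_nonneg_left hq2lb
        have := ha2.le; have := hd.le; have := hτ.le; have := hu0.le
        positivity
    _ = q ^ 2 * (a2 ^ 2 * (p:ℝ) ^ (1 - δ2)) * u0 ^ 2 *
          (a2 ^ 2 * d ^ 2 * τ * (p:ℝ) ^ (1 - δ2)) := by
        rw [← hpp]; ring
    _ ≤ q ^ 2 * (a2 ^ 2 * (p:ℝ) ^ (1 - δ2)) * u0 ^ 2 * spec K ^ 2 := by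
        apply mul_le_mul_of_nonneg_left hBA
        have h6 : (0:ℝ) ≤ a2 ^ 2 * (p:ℝ) ^ (1 - δ2) := by positivity
        positivity
    _ = (q * (cA * (u0 * spec K))) ^ 2 := by rw [← hcA2]; ring
    _ ≤ spec (B1ᵀ * SigY1 μ y n h2s (r0 + m)) ^ 2 := hsq2
    _ ≤ spec (B1ᵀ * (∑ h ∈ Finset.Icc 1 h0,
          SigY1 μ y n h (r0 + m) * (SigY1 μ y n h (r0 + m))ᵀ) * B1) := hsum
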